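/- Let A be a real n×n matrix that is indecomposable, with a_{ij} ≤ 0 for i ≠ j, and such that a_{ij} = 0 implies a_{ji} = 0. Then exactly one of the following holds (and the same alternative holds for the transpose of A): (Fin) det(A) ≠ 0, there exists u > 0 with Au > 0, and Av ≥ 0 implies v = 0 or v > 0; (Aff) corank(A) = 1, there exists u > 0 with Au = 0, and Av ≥ 0 implies Av = 0; (Ind) there exists u > 0 with Au < 0, and Av ≥ 0 together with v ≥ 0 implies v = 0. -/

import Mathlib

open scoped BigOperators
open Matrix

/-- All entries of a real vector are positive. -/
def VecPos {n : ℕ} (u : Fin n → ℝ) : Prop := ∀ i, 0 < u i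

/-- All entries of a real vector are nonnegative. -/
def VecNonneg {n : ℕ} (u : Fin n → ℝ) : Prop := ∀ i, 0 ≤ u i

/-- All entries of a real vector are negative. -/
def VecNeg {n : ℕ} (u : Fin n → ℝ) : Prop := ∀ i, u i < 0

/-- A matrix is indecomposable: there is no nontrivial partition `I ⊔ J` of the
index set with `A i j = 0` for all `i ∈ I`, `j ∈ J`. -/
def Indecomposable {n : ℕ} (A : Matrix (Fin n) (Fin n) ℝ) : Prop :=
  ∀ I : Finset (Fin n), I ≠ ∅ → I ≠ Finset.univ → ∃ i ∈ I, ∃ j ∈ Iᶜ, A i j ≠ 0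

/-- Type (Fin): `det A ≠ 0`; some `u > 0` with `Au > 0`; `Av ≥ 0` implies
`v = 0` or `v > 0`. -/
def VinbergFin {n : ℕ} (A : Matrix (Fin n) (Fin n) ℝ) : Prop :=
  A.det ≠ 0 ∧ (∃ u, VecPos u ∧ VecPos (A.mulVec u)) ∧
    ∀ v, VecNonneg (A.mulVec v) → v = 0 ∨ VecPos v

/-- Type (Aff): `corank A = 1`; some `u > 0` with `Au = 0`; `Av ≥ 0` implies
`Av = 0`. -/
def VinbergAff {n : ℕ} (A : Matrix (Fin n) (Fin n) ℝ) : Prop :=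
  A.rank = n - 1 ∧ (∃ u, VecPos u ∧ A.mulVec u = 0) ∧
    ∀ v, VecNonneg (A.mulVec v) → A.mulVec v = 0

/-- Type (Ind): some `u > 0` with `Au < 0`; `Av ≥ 0` and `v ≥ 0` imply `v = 0`. -/
def VinbergInd {n : ℕ} (A : Matrix (Fin n) (Fin n) ℝ) : Prop :=
  (∃ u, VecPos u ∧ VecNeg (A.mulVec u)) ∧
    ∀ v, VecNonneg (A.mulVec v) → VecNonneg v → v = 0

namespace VinbergAux

variable {n : ℕ}

lemma mulVec_apply' (A : Matrix (Fin n) (Fin n) ℝ) (u : Fin n → ℝ) (i : Fin n) :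
    A.mulVec u i = ∑ j, A i j * u j := rfl

lemma dot_nonneg {p x : Fin n → ℝ} (hp : VecNonneg p) (hx : VecNonneg x) :
    0 ≤ p ⬝ᵥ x :=
  Finset.sum_nonneg fun i _ => mul_nonneg (hp i) (hx i)

lemma dot_eq_zero {p x : Fin n → ℝ} (hp : VecPos p) (hx : VecNonneg x)
    (h : p ⬝ᵥ x = 0) : x = 0 := by
  have := (Finset.sum_eq_zero_iff_of_nonneg
    (fun i _ => mul_nonneg (hp i).le (hx i))).1 h
  funext i
  have hi := this i (Finset.mem_univ i)
  have := (hp i).ne'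
  have : x i = 0 := by
    rcases mul_eq_zero.1 hi with h' | h'
    · exact absurd h' this
    · exact h'
  simpa using this

lemma pair (A : Matrix (Fin n) (Fin n) ℝ) (p w : Fin n → ℝ) :
    p ⬝ᵥ A.mulVec w = Aᵀ.mulVec p ⬝ᵥ w := by
  rw [Matrix.dotProduct_mulVec, ← Matrix.mulVec_transpose]

lemma indec_transpose {A : Matrix (Fin n) (Fin n) ℝ} (hind : Indecomposable A)
    (hsym : ∀ i j, A i j = 0 → A j i = 0) : Indecomposable Aᵀ := by
  intro I h1 h2
  obtain ⟨i, hi, j, hj, h⟩ := hind I h1 h2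
  exact ⟨i, hi, j, hj, fun hz => h (hsym j i hz)⟩

lemma off_transpose {A : Matrix (Fin n) (Fin n) ℝ} (hoff : ∀ i j, i ≠ j → A i j ≤ 0) :
    ∀ i j, i ≠ j → Aᵀ i j ≤ 0 := fun i j h => hoff j i (Ne.symm h)

lemma sym_transpose {A : Matrix (Fin n) (Fin n) ℝ} (hsym : ∀ i j, A i j = 0 → A j i = 0) :
    ∀ i j, Aᵀ i j = 0 → Aᵀ j i = 0 := fun i j h => hsym j i h

/-- L1: dichotomy for nonnegative vectors. -/
lemma dichotomy {A : Matrix (Fin n) (Fin n) ℝ} (hind : Indecomposable A)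
    (hoff : ∀ i j, i ≠ j → A i j ≤ 0) (u : Fin n → ℝ)
    (hu : VecNonneg u) (hAu : VecNonneg (A.mulVec u)) : u = 0 ∨ VecPos u := by
  classical
  by_cases hpos : VecPos u
  · exact Or.inr hpos
  by_cases hz : u = 0
  · exact Or.inl hz
  exfalso
  set I : Finset (Fin n) := Finset.univ.filter (fun i => u i = 0) with hI
  have hImem : ∀ i, i ∈ I ↔ u i = 0 := by
    intro i; simp [hI]
  have hInonempty : I ≠ ∅ := by
    rcases not_forall.1 hpos with ⟨i, hi⟩
    have : u i = 0 := le_antisymm (not_lt.1 hi) (hu i)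
    intro h
    have := (hImem i).2 this
    simp [h] at this
  have hInotuniv : I ≠ Finset.univ := by
    intro h
    apply hz
    funext i
    have : i ∈ I := h ▸ Finset.mem_univ i
    simpa using (hImem i).1 this
  obtain ⟨i, hi, j, hj, hAij⟩ := hind I hInonempty hInotuniv
  have hui : u i = 0 := (hImem i).1 hi
  have huj : 0 < u j := by
    have : ¬ u j = 0 := by
      intro h
      exact (Finset.mem_compl.1 hj) ((hImem j).2 h)
    exact lt_of_le_of_ne (hu j) (Ne.symm this)
  have hij : i ≠ j := by
    intro h; rw [h] at hui; exact huj.ne' hui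
  have hAijneg : A i j < 0 := lt_of_le_of_ne (hoff i j hij) hAij
  have hterms : ∀ k, A i k * u k ≤ 0 := by
    intro k
    by_cases hk : u k = 0
    · simp [hk]
    · have hk' : 0 < u k := lt_of_le_of_ne (hu k) (Ne.symm hk)
      have hik : i ≠ k := by
        intro h; rw [← h] at hk; exact hk hui
      exact mul_nonpos_of_nonpos_of_nonneg (hoff i k hik) (hu k)
  have hlt : A.mulVec u i < 0 := by
    rw [mulVec_apply']
    have h1 : ∑ k ∈ Finset.univ \ {j}, A i k * u k ≤ 0 :=
      Finset.sum_nonpos fun k _ => hterms k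
    have h2 : A i j * u j < 0 := mul_neg_of_neg_of_pos hAijneg huj
    have := Finset.sum_eq_sum_sdiff_singleton_add (Finset.mem_univ j)
      (fun k => A i k * u k)
    rw [this]
    linarith
  exact absurd (hAu i) (not_le.2 hlt)

end VinbergAux

namespace VinbergAux

variable {n : ℕ}

/-- L3: structure of the cone `{u : Au ≥ 0}` when it contains a positive vector. -/
lemma cone_structure {A : Matrix (Fin n) (Fin n) ℝ} (hind : Indecomposable A)
    (hoff : ∀ i j, i ≠ j → A i j ≤ 0) {v : Fin n → ℝ}
    (hv : VecPos v) (hAv : VecNonneg (A.mulVec v)) (u : Fin n → ℝ)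
    (hAu : VecNonneg (A.mulVec u)) :
    (u = 0 ∨ VecPos u) ∨ (∃ c : ℝ, c < 0 ∧ u = c • v ∧ A.mulVec v = 0) := by
  classical
  by_cases hu : VecNonneg u
  · exact Or.inl (dichotomy hind hoff u hu hAu)
  right
  obtain ⟨i₀, hi₀⟩ := not_forall.1 hu
  have hi₀' : u i₀ < 0 := not_le.1 hi₀
  set s : Finset (Fin n) := Finset.univ.filter (fun i => u i < 0) with hs
  have hsne : s.Nonempty := ⟨i₀, by simp [hs, hi₀']⟩
  set t : ℝ := s.inf' hsne (fun i => v i / (-u i)) with htdef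
  have ht : 0 < t := by
    rw [htdef, Finset.lt_inf'_iff]
    intro i hi
    have : u i < 0 := by simpa [hs] using hi
    exact div_pos (hv i) (by linarith)
  set w : Fin n → ℝ := v + t • u with hw
  have hwnn : VecNonneg w := by
    intro i
    by_cases hiu : u i < 0
    · have his : i ∈ s := by simp [hs, hiu]
      have hle : t ≤ v i / (-u i) := Finset.inf'_le _ his
      have hpos : (0:ℝ) < -u i := by linarith
      have := (le_div_iff₀ hpos).1 hle
      simp only [hw, Pi.add_apply, Pi.smul_apply, smul_eq_mul]
      nlinarith
    · have : 0 ≤ u i := not_lt.1 hiu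
      simp only [hw, Pi.add_apply, Pi.smul_apply, smul_eq_mul]
      nlinarith [hv i, ht]
  have hAw : VecNonneg (A.mulVec w) := by
    intro i
    rw [hw, Matrix.mulVec_add, Matrix.mulVec_smul]
    simp only [Pi.add_apply, Pi.smul_apply, smul_eq_mul]
    nlinarith [hAv i, hAu i, ht]
  obtain ⟨i₁, hi₁s, hi₁⟩ := Finset.exists_mem_eq_inf' hsne (fun i => v i / (-u i))
  have hui₁ : u i₁ < 0 := by simpa [hs] using hi₁s
  have hwi₁ : w i₁ = 0 := by
    simp only [hw, Pi.add_apply, Pi.smul_apply, smul_eq_mul]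
    rw [htdef, hi₁]
    have hne : u i₁ ≠ 0 := hui₁.ne
    rw [div_neg, neg_mul, div_mul_cancel₀ _ hne]
    ring
  have hw0 : w = 0 := by
    rcases dichotomy hind hoff w hwnn hAw with h | h
    · exact h
    · exact absurd hwi₁ (h i₁).ne'
  have hcv : u = (-t⁻¹) • v := by
    funext i
    have : v i + t * u i = 0 := by
      have := congrFun hw0 i
      simpa [hw] using this
    have htne : t ≠ 0 := ht.ne'
    simp only [Pi.smul_apply, smul_eq_mul]
    field_simp
    linarith
  have hAv0 : A.mulVec v = 0 := by
    have hAuc : A.mulVec u = (-t⁻¹) • A.mulVec v := by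
      rw [hcv, Matrix.mulVec_smul]
    funext i
    have h1 := hAu i
    have h2 := hAv i
    rw [hAuc] at h1
    simp only [Pi.smul_apply, smul_eq_mul] at h1
    have hti : 0 < t⁻¹ := inv_pos.2 ht
    simp only [Pi.zero_apply]
    nlinarith
  exact ⟨-t⁻¹, by simp [inv_pos.2 ht], hcv, hAv0⟩

end VinbergAux

namespace VinbergAux

variable {n : ℕ}

/-- L2 (Gordan-type alternative). -/
lemma gordan (hn : 0 < n) (A : Matrix (Fin n) (Fin n) ℝ) :
    (∃ u, VecPos u ∧ VecNeg (A.mulVec u)) ∨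
    (∃ p, VecNonneg p ∧ p ≠ 0 ∧ VecNonneg (Aᵀ.mulVec p)) := by
  classical
  set g : (Fin n ⊕ Fin n) → (Fin n → ℝ) := Sum.elim (fun i => fun j => A i j)
      (fun j => fun j' => if j' = j then (-1:ℝ) else 0) with hg
  set Δ : Set ((Fin n ⊕ Fin n) → ℝ) := {y | (∀ k, 0 ≤ y k) ∧ ∑ k, y k = 1} with hΔ
  set φ : ((Fin n ⊕ Fin n) → ℝ) → (Fin n → ℝ) := fun y j => ∑ k, y k * g k j with hφ
  set Q : ((Fin n ⊕ Fin n) → ℝ) → ℝ := fun y => ∑ j, (φ y j)^2 with hQ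
  -- compactness of the simplex
  have hclosed : IsClosed Δ := by
    have h1 : IsClosed {y : (Fin n ⊕ Fin n) → ℝ | ∀ k, 0 ≤ y k} := by
      have : {y : (Fin n ⊕ Fin n) → ℝ | ∀ k, 0 ≤ y k} = ⋂ k, {y | 0 ≤ y k} := by
        ext y; simp [Set.mem_iInter]
      rw [this]
      exact isClosed_iInter fun k => isClosed_le continuous_const (continuous_apply k)
    have h2 : IsClosed {y : (Fin n ⊕ Fin n) → ℝ | ∑ k, y k = 1} :=
      isClosed_eq (continuous_finset_sum _ fun k _ => continuous_apply k) continuous_const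
    have : Δ = {y : (Fin n ⊕ Fin n) → ℝ | ∀ k, 0 ≤ y k} ∩
        {y : (Fin n ⊕ Fin n) → ℝ | ∑ k, y k = 1} := by
      ext y; simp [hΔ, Set.mem_setOf_eq, Set.mem_inter_iff]
    rw [this]
    exact h1.inter h2
  have hbdd : Bornology.IsBounded Δ := by
    refine Metric.isBounded_closedBall (x := (0 : (Fin n ⊕ Fin n) → ℝ)) (r := 1) |>.subset ?_
    intro y hy
    rw [Metric.mem_closedBall, dist_zero_right]
    refine (pi_norm_le_iff_of_nonneg zero_le_one).2 fun k => ?_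
    rw [Real.norm_eq_abs, abs_le]
    constructor
    · linarith [hy.1 k]
    · calc y k ≤ ∑ k', y k' :=
            Finset.single_le_sum (fun k' _ => hy.1 k') (Finset.mem_univ k)
        _ = 1 := hy.2
  have hcompact : IsCompact Δ := Metric.isCompact_of_isClosed_isBounded hclosed hbdd
  have hne : Δ.Nonempty := by
    refine ⟨fun k => if k = Sum.inl ⟨0, hn⟩ then 1 else 0, fun k => ?_, ?_⟩
    · dsimp only; split <;> norm_num
    · show (∑ k : Fin n ⊕ Fin n, if k = Sum.inl (⟨0, hn⟩ : Fin n) then (1:ℝ) else 0) = 1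
      rw [Finset.sum_ite_eq' Finset.univ (Sum.inl (⟨0, hn⟩ : Fin n)) (fun _ => (1:ℝ))]
      simp
  have hQcont : Continuous Q := by
    refine continuous_finset_sum _ fun j _ => ?_
    exact (continuous_finset_sum _ fun k _ => (continuous_apply k).mul continuous_const).pow 2
  obtain ⟨y, hyΔ, hymin'⟩ := hcompact.exists_isMinOn hne hQcont.continuousOn
  have hymin : ∀ z ∈ Δ, Q y ≤ Q z := fun z hz => hymin' hz
  set sv : Fin n → ℝ := φ y with hsv
  -- variational inequality
  have key : ∀ k₀ : Fin n ⊕ Fin n, ∑ j, sv j ^ 2 ≤ ∑ j, sv j * g k₀ j := by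
    intro k₀
    set D : ℝ := ∑ j, sv j * (g k₀ j - sv j) with hD
    set C : ℝ := ∑ j, (g k₀ j - sv j)^2 with hC
    have hCnn : 0 ≤ C := Finset.sum_nonneg fun j _ => sq_nonneg _
    have hsum : ∑ j, sv j * g k₀ j = ∑ j, sv j ^ 2 + D := by
      rw [hD]
      rw [Finset.sum_congr rfl (fun j _ => show sv j * (g k₀ j - sv j)
        = sv j * g k₀ j - sv j ^ 2 by ring), Finset.sum_sub_distrib]
      ring
    have hkey : ∀ t : ℝ, 0 < t → t ≤ 1 → 0 ≤ 2*t*D + t^2*C := by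
      intro t ht0 ht1
      set yt : (Fin n ⊕ Fin n) → ℝ :=
        fun k => (1-t) * y k + t * (if k = k₀ then 1 else 0) with hyt
      have hytΔ : yt ∈ Δ := by
        constructor
        · intro k
          simp only [hyt]
          have := hyΔ.1 k
          split <;> nlinarith
        · simp only [hyt]
          rw [Finset.sum_add_distrib, ← Finset.mul_sum, ← Finset.mul_sum, hyΔ.2,
            Finset.sum_ite_eq' Finset.univ k₀ (fun _ => (1:ℝ))]
          simp
      have hφyt : ∀ j, φ yt j = sv j + t * (g k₀ j - sv j) := by
        intro j
        simp only [hφ, hyt, hsv]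
        rw [Finset.sum_congr rfl (fun k _ => show
          ((1-t) * y k + t * (if k = k₀ then 1 else 0)) * g k j
            = (1-t) * (y k * g k j) + t * ((if k = k₀ then g k j else 0)) by
          split <;> ring), Finset.sum_add_distrib, ← Finset.mul_sum, ← Finset.mul_sum,
          Finset.sum_ite_eq' Finset.univ k₀ (fun k => g k j)]
        simp only [Finset.mem_univ, if_true]
        ring
      have hQyt : Q yt = Q y + (2*t*D + t^2*C) := by
        simp only [hQ]
        rw [Finset.sum_congr rfl (fun j _ => show (φ yt j)^2
          = (φ y j)^2 + (2*t*(sv j * (g k₀ j - sv j)) + t^2*((g k₀ j - sv j)^2)) by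
          rw [hφyt j]; simp only [hsv]; ring), Finset.sum_add_distrib]
        rw [hD, hC, Finset.sum_add_distrib, ← Finset.mul_sum, ← Finset.mul_sum]
      have h := hymin yt hytΔ
      rw [hQyt] at h
      linarith
    by_contra hcon
    push_neg at hcon
    have hDneg : D < 0 := by linarith [hsum]
    set t : ℝ := min 1 (-D / (C+1)) with htd
    have ht0 : 0 < t := lt_min one_pos (div_pos (by linarith) (by linarith))
    have ht1 : t ≤ 1 := min_le_left _ _
    have ht2 : t ≤ -D/(C+1) := min_le_right _ _
    have h3 : t * (C+1) ≤ -D := (le_div_iff₀ (by linarith)).1 ht2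
    have h4 := hkey t ht0 ht1
    nlinarith [mul_le_mul_of_nonneg_left h3 ht0.le, mul_pos ht0 ht0,
      mul_neg_of_pos_of_neg ht0 hDneg]
  have hQnn : 0 ≤ Q y := Finset.sum_nonneg fun j _ => sq_nonneg _
  by_cases hQ0 : Q y = 0
  · -- right alternative
    right
    have hsv0 : ∀ j, sv j = 0 := by
      intro j
      have := (Finset.sum_eq_zero_iff_of_nonneg (fun j _ => sq_nonneg (sv j))).1 hQ0 j
        (Finset.mem_univ j)
      exact pow_eq_zero_iff two_ne_zero |>.1 this
    set p : Fin n → ℝ := fun i => y (Sum.inl i) with hp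
    have hrel : ∀ j, Aᵀ.mulVec p j = y (Sum.inr j) := by
      intro j
      have h0 := hsv0 j
      simp only [hsv, hφ] at h0
      rw [Fintype.sum_sum_type] at h0
      simp only [hg, Sum.elim_inl, Sum.elim_inr] at h0
      have h1 : ∑ j', y (Sum.inr j') * (if j = j' then (-1:ℝ) else 0) = - y (Sum.inr j) := by
        rw [Finset.sum_congr rfl (fun j' _ => show
          y (Sum.inr j') * (if j = j' then (-1:ℝ) else 0)
            = (if j = j' then -y (Sum.inr j') else 0) by split <;> ring),
          Finset.sum_ite_eq Finset.univ j (fun j' => -y (Sum.inr j'))]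
        simp
      rw [h1] at h0
      rw [mulVec_apply']
      simp only [Matrix.transpose_apply, hp]
      rw [Finset.sum_congr rfl (fun i _ => mul_comm (A i j) (y (Sum.inl i)))]
      linarith
    refine ⟨p, fun i => hyΔ.1 (Sum.inl i), ?_, fun j => hrel j ▸ hyΔ.1 (Sum.inr j)⟩
    intro hp0
    have hz : ∀ k, y k = 0 := by
      intro k
      rcases k with i | j
      · exact congrFun hp0 i
      · have := hrel j
        rw [hp0, Matrix.mulVec_zero] at this
        exact this.symm
    have := hyΔ.2
    rw [Finset.sum_eq_zero (fun k _ => hz k)] at this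
    norm_num at this
  · -- left alternative
    left
    have hQpos : 0 < Q y := lt_of_le_of_ne hQnn (Ne.symm hQ0)
    have hneg : ∀ j, sv j < 0 := by
      intro j
      have hk := key (Sum.inr j)
      have h1 : ∑ j', sv j' * g (Sum.inr j) j' = - sv j := by
        simp only [hg, Sum.elim_inr]
        rw [Finset.sum_congr rfl (fun j' _ => show
          sv j' * (if j' = j then (-1:ℝ) else 0)
            = (if j' = j then -sv j' else 0) by split <;> ring),
          Finset.sum_ite_eq' Finset.univ j (fun j' => -sv j')]
        simp
      rw [h1] at hk
      have : Q y = ∑ j, sv j ^ 2 := by simp only [hQ, hsv]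
      linarith [this ▸ hQpos]
    refine ⟨fun j => - sv j, fun j => by dsimp only; linarith [hneg j], ?_⟩
    intro i
    have hk := key (Sum.inl i)
    have h1 : ∑ j, sv j * g (Sum.inl i) j = ∑ j, A i j * sv j := by
      simp only [hg, Sum.elim_inl]
      exact Finset.sum_congr rfl fun j _ => mul_comm _ _
    rw [h1] at hk
    have h2 : A.mulVec (fun j => - sv j) i = - ∑ j, A i j * sv j := by
      rw [mulVec_apply']
      rw [Finset.sum_congr rfl (fun j _ => show A i j * (fun j => - sv j) j
        = -(A i j * sv j) by ring)]
      rw [Finset.sum_neg_distrib]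
    rw [h2]
    have : Q y = ∑ j, sv j ^ 2 := by simp only [hQ, hsv]
    linarith [this ▸ hQpos]

end VinbergAux

namespace VinbergAux

variable {n : ℕ}

lemma vecNonneg_zero : VecNonneg (0 : Fin n → ℝ) := fun i => le_refl 0

lemma pos_upgrade {A : Matrix (Fin n) (Fin n) ℝ} (hind : Indecomposable A)
    (hoff : ∀ i j, i ≠ j → A i j ≤ 0) {p : Fin n → ℝ} (hp : VecNonneg p)
    (hpne : p ≠ 0) (hAp : VecNonneg (A.mulVec p)) : VecPos p :=
  (dichotomy hind hoff p hp hAp).resolve_left hpne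

lemma aux_T (hn : 0 < n) {B : Matrix (Fin n) (Fin n) ℝ} (hind : Indecomposable B)
    (hoff : ∀ i j, i ≠ j → B i j ≤ 0) (hsym : ∀ i j, B i j = 0 → B j i = 0) :
    (∃ p, VecNonneg p ∧ p ≠ 0 ∧ VecNonneg (Bᵀ.mulVec p)) →
    (∃ q, VecNonneg q ∧ q ≠ 0 ∧ VecNonneg (B.mulVec q)) := by
  rintro ⟨p, hp, hpne, hBp⟩
  have hindT := indec_transpose hind hsym
  have hoffT := off_transpose hoff
  have hppos : VecPos p := pos_upgrade hindT hoffT hp hpne hBp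
  rcases gordan hn Bᵀ with ⟨u, hu, hBu⟩ | ⟨q, hq, hqne, hBq⟩
  · exfalso
    have hAu' : VecNonneg (Bᵀ.mulVec (-u)) := by
      intro i
      rw [Matrix.mulVec_neg]
      simp only [Pi.neg_apply]
      linarith [hBu i]
    rcases cone_structure hindT hoffT hppos hBp (-u) hAu' with (h | h) | ⟨c, hc, hcu, hB0⟩
    · have h1 := congrFun h ⟨0, hn⟩
      simp only [Pi.neg_apply, Pi.zero_apply, neg_eq_zero] at h1
      exact (hu ⟨0, hn⟩).ne' h1
    · have h1 := h ⟨0, hn⟩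
      simp only [Pi.neg_apply] at h1
      linarith [hu ⟨0, hn⟩]
    · have hueq : u = (-c) • p := by
        funext i
        have h1 := congrFun hcu i
        simp only [Pi.neg_apply, Pi.smul_apply, smul_eq_mul] at h1 ⊢
        linarith
      have h2 : Bᵀ.mulVec u = 0 := by
        rw [hueq, Matrix.mulVec_smul, hB0]
        simp
      have h3 := congrFun h2 ⟨0, hn⟩
      exact (hBu ⟨0, hn⟩).ne h3
  · rw [Matrix.transpose_transpose] at hBq
    exact ⟨q, hq, hqne, hBq⟩

lemma aff_dual (hn : 0 < n) {B : Matrix (Fin n) (Fin n) ℝ} (hind : Indecomposable B)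
    (hoff : ∀ i j, i ≠ j → B i j ≤ 0) (hsym : ∀ i j, B i j = 0 → B j i = 0)
    (h0 : ∃ v, VecPos v ∧ B.mulVec v = 0) : ∃ p, VecPos p ∧ Bᵀ.mulVec p = 0 := by
  obtain ⟨v, hv, hBv⟩ := h0
  have hvne : v ≠ 0 := fun h => (hv ⟨0, hn⟩).ne' (congrFun h ⟨0, hn⟩)
  have hq : ∃ q, VecNonneg q ∧ q ≠ 0 ∧ VecNonneg (B.mulVec q) :=
    ⟨v, fun i => (hv i).le, hvne, by rw [hBv]; exact vecNonneg_zero⟩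
  have hqT := aux_T hn (indec_transpose hind hsym) (off_transpose hoff)
    (sym_transpose hsym) (by rwa [Matrix.transpose_transpose])
  obtain ⟨p, hp, hpne, hBp⟩ := hqT
  have hppos := pos_upgrade (indec_transpose hind hsym) (off_transpose hoff) hp hpne hBp
  have hdot : Bᵀ.mulVec p ⬝ᵥ v = 0 := by
    rw [← pair B p v, hBv, dotProduct_zero]
  exact ⟨p, hppos, dot_eq_zero hv hBp (by rw [dotProduct_comm]; exact hdot)⟩

lemma aff_case (hn : 0 < n) {B : Matrix (Fin n) (Fin n) ℝ} (hind : Indecomposable B)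
    (hoff : ∀ i j, i ≠ j → B i j ≤ 0) (hsym : ∀ i j, B i j = 0 → B j i = 0)
    (h0 : ∃ v, VecPos v ∧ B.mulVec v = 0) : VinbergAff B := by
  obtain ⟨v, hv, hBv⟩ := h0
  obtain ⟨p, hppos, hBp0⟩ := aff_dual hn hind hoff hsym ⟨v, hv, hBv⟩
  have hBvnn : VecNonneg (B.mulVec v) := by rw [hBv]; exact vecNonneg_zero
  have third : ∀ w, VecNonneg (B.mulVec w) → B.mulVec w = 0 := by
    intro w hw
    refine dot_eq_zero hppos hw ?_
    rw [pair, hBp0, zero_dotProduct]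
  refine ⟨?_, ⟨v, hv, hBv⟩, third⟩
  have hker : LinearMap.ker B.mulVecLin = Submodule.span ℝ {v} := by
    ext x
    rw [LinearMap.mem_ker, Submodule.mem_span_singleton, Matrix.mulVecLin_apply]
    constructor
    · intro hx
      have hx' : VecNonneg (B.mulVec x) := by rw [hx]; exact vecNonneg_zero
      rcases cone_structure hind hoff hv hBvnn x hx' with (h | h) | ⟨c, hc, hcx, _⟩
      · exact ⟨0, by rw [zero_smul, h]⟩
      · have hmx : VecNonneg (B.mulVec (-x)) := by
          rw [Matrix.mulVec_neg, hx]
          simpa using vecNonneg_zero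
        rcases cone_structure hind hoff hv hBvnn (-x) hmx with (h' | h') | ⟨c, hc, hcx, _⟩
        · refine ⟨0, ?_⟩
          rw [zero_smul]
          funext i
          have := congrFun h' i
          simp only [Pi.neg_apply, Pi.zero_apply] at this ⊢
          linarith
        · exfalso
          have := h' ⟨0, hn⟩
          simp only [Pi.neg_apply] at this
          linarith [h ⟨0, hn⟩]
        · refine ⟨-c, ?_⟩
          funext i
          have := congrFun hcx i
          simp only [Pi.neg_apply, Pi.smul_apply, smul_eq_mul] at this ⊢
          linarith
      · exact ⟨c, hcx.symm⟩
    · rintro ⟨c, rfl⟩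
      rw [Matrix.mulVec_smul, hBv]
      simp
  have hvne : v ≠ 0 := fun h => (hv ⟨0, hn⟩).ne' (congrFun h ⟨0, hn⟩)
  have h1 : Module.finrank ℝ (LinearMap.ker B.mulVecLin) = 1 := by
    rw [hker]
    exact finrank_span_singleton hvne
  have h2 := LinearMap.finrank_range_add_finrank_ker B.mulVecLin
  rw [h1, Module.finrank_fin_fun] at h2
  show B.rank = n - 1
  rw [Matrix.rank]
  omega

lemma fin_case (hn : 0 < n) {B : Matrix (Fin n) (Fin n) ℝ} (hind : Indecomposable B)
    (hoff : ∀ i j, i ≠ j → B i j ≤ 0) (hsym : ∀ i j, B i j = 0 → B j i = 0)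
    (hq : ∃ q, VecNonneg q ∧ q ≠ 0 ∧ VecNonneg (B.mulVec q))
    (h0 : ¬∃ v, VecPos v ∧ B.mulVec v = 0) : VinbergFin B := by
  obtain ⟨q, hq1, hq2, hq3⟩ := hq
  have hqpos := pos_upgrade hind hoff hq1 hq2 hq3
  have third : ∀ w, VecNonneg (B.mulVec w) → w = 0 ∨ VecPos w := by
    intro w hw
    rcases cone_structure hind hoff hqpos hq3 w hw with h | ⟨c, hc, hcw, hB0⟩
    · exact h
    · exact absurd ⟨q, hqpos, hB0⟩ h0
  have hdet : B.det ≠ 0 := by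
    intro hd
    obtain ⟨x, hxne, hx0⟩ := Matrix.exists_mulVec_eq_zero_iff.2 hd
    rcases third x (by rw [hx0]; exact vecNonneg_zero) with h | h
    · exact hxne h
    · exact h0 ⟨x, h, hx0⟩
  have hu : B.mulVec (B⁻¹.mulVec 1) = 1 := by
    rw [Matrix.mulVec_mulVec, Matrix.mul_nonsing_inv _ (isUnit_iff_ne_zero.2 hdet),
      Matrix.one_mulVec]
  refine ⟨hdet, ⟨B⁻¹.mulVec 1, ?_, ?_⟩, third⟩
  · rcases third _ (by rw [hu]; intro i; norm_num) with h | h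
    · exfalso
      rw [h, Matrix.mulVec_zero] at hu
      have := congrFun hu ⟨0, hn⟩
      norm_num at this
    · exact h
  · rw [hu]
    intro i
    norm_num

lemma ind_case (hn : 0 < n) {B : Matrix (Fin n) (Fin n) ℝ} (hind : Indecomposable B)
    (hoff : ∀ i j, i ≠ j → B i j ≤ 0) (hsym : ∀ i j, B i j = 0 → B j i = 0)
    (h : ¬∃ q, VecNonneg q ∧ q ≠ 0 ∧ VecNonneg (B.mulVec q)) : VinbergInd B := by
  constructor
  · rcases gordan hn B with hl | hr
    · exact hl
    · exact absurd (aux_T hn hind hoff hsym hr) h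
  · intro w hBw hw
    by_contra hne
    exact h ⟨w, hw, hne, hBw⟩

lemma not_fin_of_aff (hn : 0 < n) {B : Matrix (Fin n) (Fin n) ℝ}
    (ha : VinbergAff B) : ¬ VinbergFin B := by
  intro hf
  obtain ⟨u, hu, hBu⟩ := ha.2.1
  have hune : u ≠ 0 := fun h => (hu ⟨0, hn⟩).ne' (congrFun h ⟨0, hn⟩)
  exact hf.1 (Matrix.exists_mulVec_eq_zero_iff.1 ⟨u, hune, hBu⟩)

lemma not_ind_of_aff (hn : 0 < n) {B : Matrix (Fin n) (Fin n) ℝ}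
    (ha : VinbergAff B) : ¬ VinbergInd B := by
  intro hi
  obtain ⟨u, hu, hBu⟩ := ha.2.1
  have := hi.2 u (by rw [hBu]; exact vecNonneg_zero) (fun i => (hu i).le)
  exact (hu ⟨0, hn⟩).ne' (congrFun this ⟨0, hn⟩)

lemma not_ind_of_fin (hn : 0 < n) {B : Matrix (Fin n) (Fin n) ℝ}
    (hf : VinbergFin B) : ¬ VinbergInd B := by
  intro hi
  obtain ⟨u, hu, hBu⟩ := hf.2.1
  have := hi.2 u (fun i => (hBu i).le) (fun i => (hu i).le)
  exact (hu ⟨0, hn⟩).ne' (congrFun this ⟨0, hn⟩)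

lemma not_aff_of_fin (hn : 0 < n) {B : Matrix (Fin n) (Fin n) ℝ}
    (hf : VinbergFin B) : ¬ VinbergAff B := fun ha => not_fin_of_aff hn ha hf

end VinbergAux


open VinbergAux

/-- **Vinberg's classification.** For a real indecomposable
`n × n` matrix with nonpositive off-diagonal entries and sign-symmetric zeros,
exactly one of the alternatives (Fin), (Aff), (Ind) holds, and each alternative
holds for `A` iff it holds for `Aᵀ`. -/
theorem vinberg_classification {n : ℕ} (hn : 0 < n) (A : Matrix (Fin n) (Fin n) ℝ)
    (hind : Indecomposable A)
    (hoff : ∀ i j, i ≠ j → A i j ≤ 0)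
    (hsym : ∀ i j, A i j = 0 → A j i = 0) :
    ((VinbergFin A ↔ VinbergFin Aᵀ) ∧ (VinbergAff A ↔ VinbergAff Aᵀ) ∧
      (VinbergInd A ↔ VinbergInd Aᵀ)) ∧
    ((VinbergFin A ∧ ¬ VinbergAff A ∧ ¬ VinbergInd A) ∨
      (¬ VinbergFin A ∧ VinbergAff A ∧ ¬ VinbergInd A) ∨
      (¬ VinbergFin A ∧ ¬ VinbergAff A ∧ VinbergInd A)) := by
  classical
  have hindT := indec_transpose hind hsym
  have hoffT := off_transpose hoff
  have hsymT := sym_transpose hsym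
  by_cases h0 : ∃ v, VecPos v ∧ A.mulVec v = 0
  · have h0T : ∃ v, VecPos v ∧ Aᵀ.mulVec v = 0 := aff_dual hn hind hoff hsym h0
    have affA := aff_case hn hind hoff hsym h0
    have affT := aff_case hn hindT hoffT hsymT h0T
    exact ⟨⟨iff_of_false (not_fin_of_aff hn affA) (not_fin_of_aff hn affT),
      iff_of_true affA affT,
      iff_of_false (not_ind_of_aff hn affA) (not_ind_of_aff hn affT)⟩,
      Or.inr (Or.inl ⟨not_fin_of_aff hn affA, affA, not_ind_of_aff hn affA⟩)⟩
  · by_cases hq : ∃ q, VecNonneg q ∧ q ≠ 0 ∧ VecNonneg (A.mulVec q)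
    · have hqT : ∃ q, VecNonneg q ∧ q ≠ 0 ∧ VecNonneg (Aᵀ.mulVec q) :=
        aux_T hn hindT hoffT hsymT (by rwa [Matrix.transpose_transpose])
      have h0T : ¬∃ v, VecPos v ∧ Aᵀ.mulVec v = 0 := by
        intro hvT
        have := aff_dual hn hindT hoffT hsymT hvT
        rw [Matrix.transpose_transpose] at this
        exact h0 this
      have finA := fin_case hn hind hoff hsym hq h0
      have finT := fin_case hn hindT hoffT hsymT hqT h0T
      exact ⟨⟨iff_of_true finA finT,
        iff_of_false (not_aff_of_fin hn finA) (not_aff_of_fin hn finT),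
        iff_of_false (not_ind_of_fin hn finA) (not_ind_of_fin hn finT)⟩,
        Or.inl ⟨finA, not_aff_of_fin hn finA, not_ind_of_fin hn finA⟩⟩
    · have hqT : ¬∃ q, VecNonneg q ∧ q ≠ 0 ∧ VecNonneg (Aᵀ.mulVec q) := by
        intro hT
        exact hq (aux_T hn hind hoff hsym hT)
      have indA := ind_case hn hind hoff hsym hq
      have indT := ind_case hn hindT hoffT hsymT hqT
      have nfA : ¬ VinbergFin A := fun hf => not_ind_of_fin hn hf indA
      have nfT : ¬ VinbergFin Aᵀ := fun hf => not_ind_of_fin hn hf indT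
      have naA : ¬ VinbergAff A := fun ha => not_ind_of_aff hn ha indA
      have naT : ¬ VinbergAff Aᵀ := fun ha => not_ind_of_aff hn ha indT
      exact ⟨⟨iff_of_false nfA nfT, iff_of_false naA naT, iff_of_true indA indT⟩,
        Or.inr (Or.inr ⟨nfA, naA, indA⟩)⟩
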